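/- Consider the linear sampled-data system ẋ(t) = A₀ x(t) + A₁ x(t_k) for t ∈ [t_k, t_{k+1}], with constant sampling period T_k = T > 0 for all k, where A₀, A₁ are real n × n matrices. This system is globally exponentially stable if and only if ρ(e^{A₀ T} + ∫₀^T e^{A₀(T−θ)} A₁ dθ) < 1, where ρ denotes spectral radius and e^{A₀ T} the matrix exponential. -/

import Mathlib

open Matrix

/-- A (global, continuous) solution of the linear sampled-data system
`ẋ(t) = A₀ x(t) + A₁ x(t_k)` for `t ∈ [t_k, t_{k+1}]`, with the constant sampling
period `T`, so that `t_k = kT`. -/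
def IsLinSampledSolution {n : ℕ} (A₀ A₁ : Matrix (Fin n) (Fin n) ℝ) (T : ℝ)
    (x : ℝ → Fin n → ℝ) : Prop :=
  Continuous x ∧
    ∀ k : ℕ, ∀ t ∈ Set.Icc (k * T) ((k + 1) * T),
      HasDerivWithinAt x (A₀.mulVec (x t) + A₁.mulVec (x (k * T)))
        (Set.Icc (k * T) ((k + 1) * T)) t

open NormedSpace

noncomputable def matCLM (𝕜 : Type*) [RCLike 𝕜] (n : ℕ) :
    Matrix (Fin n) (Fin n) 𝕜 ≃ₐ[𝕜] ((Fin n → 𝕜) →L[𝕜] (Fin n → 𝕜)) :=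
  Matrix.toLinAlgEquiv'.trans <|
    AlgEquiv.ofLinearEquiv LinearMap.toContinuousLinearMap
      (by ext x; rfl) (fun f g => by ext x; rfl)

lemma matCLM_apply {𝕜 : Type*} [RCLike 𝕜] {n : ℕ} (M : Matrix (Fin n) (Fin n) 𝕜)
    (v : Fin n → 𝕜) : matCLM 𝕜 n M v = M.mulVec v := rfl

lemma matCLM_continuous (𝕜 : Type*) [RCLike 𝕜] (n : ℕ) : Continuous (matCLM 𝕜 n) :=
  LinearMap.continuous_of_finiteDimensional (matCLM 𝕜 n).toLinearEquiv.toLinearMap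

lemma matCLM_exp (𝕜 : Type*) [RCLike 𝕜] (n : ℕ) (M : Matrix (Fin n) (Fin n) 𝕜) :
    matCLM 𝕜 n (exp M) = exp (matCLM 𝕜 n M) := by
  letI : SeminormedRing (Matrix (Fin n) (Fin n) 𝕜) := Matrix.linftyOpSemiNormedRing
  letI : NormedRing (Matrix (Fin n) (Fin n) 𝕜) := Matrix.linftyOpNormedRing
  letI : NormedAlgebra 𝕜 (Matrix (Fin n) (Fin n) 𝕜) := Matrix.linftyOpNormedAlgebra
  letI : NormedAlgebra ℚ (Matrix (Fin n) (Fin n) 𝕜) := NormedAlgebra.restrictScalars ℚ 𝕜 _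
  have : @CompleteSpace (Matrix (Fin n) (Fin n) 𝕜)
    (PseudoMetricSpace.toUniformSpace (α := Matrix (Fin n) (Fin n) 𝕜)) := FiniteDimensional.complete 𝕜 _
  exact map_exp (matCLM 𝕜 n) (matCLM_continuous 𝕜 n) M

variable {n : ℕ}

lemma expCurve_continuous (L : (Fin n → ℝ) →L[ℝ] (Fin n → ℝ)) :
    Continuous fun u : ℝ => exp (u • L) :=
  continuous_iff_continuousAt.2 fun u => (hasDerivAt_exp_smul_const L u).continuousAt

noncomputable def Phi (A₀ A₁ : Matrix (Fin n) (Fin n) ℝ) (s : ℝ) :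
    (Fin n → ℝ) →L[ℝ] (Fin n → ℝ) :=
  exp (s • matCLM ℝ n A₀) +
    ∫ u in (0:ℝ)..s, exp (u • matCLM ℝ n A₀) * matCLM ℝ n A₁

lemma hasDerivAt_Phi (A₀ A₁ : Matrix (Fin n) (Fin n) ℝ) (s : ℝ) :
    HasDerivAt (Phi A₀ A₁) (matCLM ℝ n A₀ * Phi A₀ A₁ s + matCLM ℝ n A₁) s := by
  set L0 := matCLM ℝ n A₀
  set L1 := matCLM ℝ n A₁
  have hc : Continuous fun u : ℝ => exp (u • L0) * L1 :=
    (expCurve_continuous L0).mul continuous_const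
  have h1 : HasDerivAt (fun u : ℝ => exp (u • L0)) (L0 * exp (s • L0)) s :=
    hasDerivAt_exp_smul_const' L0 s
  have h2 : HasDerivAt (fun u : ℝ => ∫ v in (0:ℝ)..u, exp (v • L0) * L1)
      (exp (s • L0) * L1) s := (hc.integral_hasStrictDerivAt 0 s).hasDerivAt
  have h3 := h1.add h2
  have key : ∫ u in (0:ℝ)..s, L0 * (exp (u • L0) * L1)
      = exp (s • L0) * L1 - exp ((0:ℝ) • L0) * L1 := by
    have hint : IntervalIntegrable (fun u : ℝ => L0 * (exp (u • L0) * L1))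
        MeasureTheory.volume 0 s := (continuous_const.mul hc).intervalIntegrable _ _
    refine intervalIntegral.integral_eq_sub_of_hasDerivAt
      (f := fun u : ℝ => exp (u • L0) * L1) (fun u _ => ?_) hint
    have := (hasDerivAt_exp_smul_const' L0 u).mul_const L1
    simpa [mul_assoc] using this
  have comm : (∫ u in (0:ℝ)..s, L0 * (exp (u • L0) * L1))
      = L0 * ∫ u in (0:ℝ)..s, exp (u • L0) * L1 := by
    have hint2 : IntervalIntegrable (fun u : ℝ => exp (u • L0) * L1)
        MeasureTheory.volume 0 s := hc.intervalIntegrable _ _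
    have := (ContinuousLinearMap.mul ℝ ((Fin n → ℝ) →L[ℝ] (Fin n → ℝ)) L0).intervalIntegral_comp_comm
      hint2
    simpa only [ContinuousLinearMap.mul_apply'] using this
  have hrw : L0 * Phi A₀ A₁ s + L1
      = L0 * exp (s • L0) + exp (s • L0) * L1 := by
    rw [Phi, mul_add, ← comm, key]
    simp [zero_smul, exp_zero]
    abel
  rw [hrw]
  exact h3

lemma Phi_zero (A₀ A₁ : Matrix (Fin n) (Fin n) ℝ) : Phi A₀ A₁ 0 = 1 := by
  simp [Phi, zero_smul, exp_zero]

lemma Phi_continuous (A₀ A₁ : Matrix (Fin n) (Fin n) ℝ) : Continuous (Phi A₀ A₁) :=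
  continuous_iff_continuousAt.2 fun s => (hasDerivAt_Phi A₀ A₁ s).continuousAt

lemma hasDerivAt_sol (A₀ A₁ : Matrix (Fin n) (Fin n) ℝ) (a : ℝ) (w : Fin n → ℝ) (t : ℝ) :
    HasDerivAt (fun t => Phi A₀ A₁ (t - a) w)
      (matCLM ℝ n A₀ (Phi A₀ A₁ (t - a) w) + matCLM ℝ n A₁ w) t := by
  have h1 : HasDerivAt (fun t : ℝ => Phi A₀ A₁ (t - a))
      (matCLM ℝ n A₀ * Phi A₀ A₁ (t - a) + matCLM ℝ n A₁) t := by
    have := (hasDerivAt_Phi A₀ A₁ (t - a)).scomp t ((hasDerivAt_id t).sub_const a)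
    simp only [one_smul, id] at this
    exact this
  have := h1.clm_apply (hasDerivAt_const t w)
  simpa using this

lemma lipschitz_affine (L : (Fin n → ℝ) →L[ℝ] (Fin n → ℝ)) (c : Fin n → ℝ) :
    LipschitzWith ‖L‖₊ (fun y => L y + c) :=
  LipschitzWith.of_dist_le_mul fun y z => by
    simpa [dist_add_right] using L.lipschitz.dist_le_mul y z

lemma solution_repr {A₀ A₁ : Matrix (Fin n) (Fin n) ℝ} {T : ℝ} {x : ℝ → Fin n → ℝ}
    (hx : IsLinSampledSolution A₀ A₁ T x) (k : ℕ) {t : ℝ}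
    (ht : t ∈ Set.Icc ((k : ℝ) * T) (((k : ℝ) + 1) * T)) :
    x t = Phi A₀ A₁ (t - k * T) (x (k * T)) := by
  set a : ℝ := (k : ℝ) * T
  set b : ℝ := ((k : ℝ) + 1) * T
  set L0 := matCLM ℝ n A₀
  set L1 := matCLM ℝ n A₁
  set c : Fin n → ℝ := L1 (x a)
  have key : Set.EqOn x (fun t => Phi A₀ A₁ (t - a) (x a)) (Set.Icc a b) := by
    apply ODE_solution_unique (v := fun _ y => L0 y + c) (K := ‖L0‖₊)
      (fun _ => lipschitz_affine L0 c)
    · exact hx.1.continuousOn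
    · intro s hs
      have h1 := hx.2 k s (Set.mem_Icc_of_Ico hs)
      have h2 : Set.Icc a b ∈ nhdsWithin s (Set.Ici s) := Icc_mem_nhdsGE_of_mem hs
      exact (h1.mono_of_mem_nhdsWithin h2)
    · exact (Continuous.continuousOn (by
        exact continuous_iff_continuousAt.2 fun s => (hasDerivAt_sol A₀ A₁ a (x a) s).continuousAt))
    · intro s hs
      exact ((hasDerivAt_sol A₀ A₁ a (x a) s)).hasDerivWithinAt
    · simp [Phi_zero]
  exact key ht

lemma solution_iterate {A₀ A₁ : Matrix (Fin n) (Fin n) ℝ} {T : ℝ} (hT : 0 < T)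
    {x : ℝ → Fin n → ℝ} (hx : IsLinSampledSolution A₀ A₁ T x) (k : ℕ) :
    x ((k : ℝ) * T) = ((Phi A₀ A₁ T) ^ k) (x 0) := by
  induction k with
  | zero => simp
  | succ k ih =>
    have ht : ((k : ℝ) + 1) * T ∈ Set.Icc ((k : ℝ) * T) (((k : ℝ) + 1) * T) := by
      constructor
      · nlinarith [hT.le]
      · exact le_rfl
    have := solution_repr hx k ht
    have harg : ((k : ℝ) + 1) * T - (k : ℝ) * T = T := by ring
    rw [harg] at this
    have : x (((k : ℝ) + 1) * T) = (Phi A₀ A₁ T) (((Phi A₀ A₁ T) ^ k) (x 0)) := by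
      rw [this, ih]
    push_cast
    rw [this, ← FunLike.coe_pow_eq_iterate, pow_succ' (Phi A₀ A₁ T) k]
    rfl

def cvec {n : ℕ} (v : Fin n → ℝ) : Fin n → ℂ := fun i => (v i : ℂ)

lemma norm_cvec (v : Fin n → ℝ) : ‖cvec v‖ = ‖v‖ := by
  simp only [cvec, Pi.norm_def, Pi.nnnorm_def]
  congr 1
  apply Finset.sup_congr rfl
  intro i _
  simp

lemma mulVec_map_cvec (M : Matrix (Fin n) (Fin n) ℝ) (v : Fin n → ℝ) :
    (M.map (algebraMap ℝ ℂ)).mulVec (cvec v) = cvec (M.mulVec v) := by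
  funext i
  simp [Matrix.mulVec, dotProduct, cvec, Matrix.map_apply]

lemma matCLM_symm_continuous (𝕜 : Type*) [RCLike 𝕜] (n : ℕ) :
    Continuous (matCLM 𝕜 n).symm :=
  LinearMap.continuous_of_finiteDimensional (matCLM 𝕜 n).symm.toLinearEquiv.toLinearMap

lemma matCLM_expmat_cont (A₀ : Matrix (Fin n) (Fin n) ℝ) (T : ℝ) :
    Continuous fun θ : ℝ => exp ((T - θ) • A₀) := by
  have h1 : (fun θ : ℝ => exp ((T - θ) • A₀)) =
      fun θ : ℝ => (matCLM ℝ n).symm (exp ((T - θ) • matCLM ℝ n A₀)) := by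
    funext θ
    rw [← map_smul (matCLM ℝ n) (T - θ) A₀, ← matCLM_exp, AlgEquiv.symm_apply_apply]
  rw [h1]
  exact (matCLM_symm_continuous ℝ n).comp
    ((expCurve_continuous (matCLM ℝ n A₀)).comp (continuous_const.sub continuous_id))

lemma hME_aux (A₀ A₁ : Matrix (Fin n) (Fin n) ℝ) (T : ℝ) :
    matCLM ℝ n (exp (T • A₀) +
      Matrix.of fun i j => ∫ θ in (0:ℝ)..T, (exp ((T - θ) • A₀) * A₁) i j)
      = Phi A₀ A₁ T := by
  set L0 := matCLM ℝ n A₀ with hL0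
  set L1 := matCLM ℝ n A₁ with hL1
  rw [map_add]
  have e1 : matCLM ℝ n (exp (T • A₀)) = exp (T • L0) := by
    rw [matCLM_exp, _root_.map_smul]
  have hFc : Continuous fun θ : ℝ => exp ((T - θ) • L0) * L1 :=
    (((expCurve_continuous L0).comp (continuous_const.sub continuous_id)).mul continuous_const)
  have hFint : IntervalIntegrable (fun θ : ℝ => exp ((T - θ) • L0) * L1)
      MeasureTheory.volume 0 T := hFc.intervalIntegrable _ _
  have hsub : (∫ u in (0:ℝ)..T, exp (u • L0) * L1)
      = ∫ θ in (0:ℝ)..T, exp ((T - θ) • L0) * L1 := by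
    have := intervalIntegral.integral_comp_sub_left
      (a := (0:ℝ)) (b := T) (fun u : ℝ => exp (u • L0) * L1) T
    rw [this]
    norm_num
  have e2 : matCLM ℝ n (Matrix.of fun i j =>
      ∫ θ in (0:ℝ)..T, (exp ((T - θ) • A₀) * A₁) i j)
      = ∫ θ in (0:ℝ)..T, exp ((T - θ) • L0) * L1 := by
    apply ContinuousLinearMap.ext
    intro v
    funext i
    have hentry : ∀ i j, Continuous fun θ : ℝ => (exp ((T - θ) • A₀) * A₁) i j := by
      intro i j
      have : Continuous fun θ : ℝ => exp ((T - θ) • A₀) * A₁ :=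
        (matCLM_expmat_cont A₀ T).mul continuous_const
      exact ((continuous_apply j).comp (continuous_apply i)).comp this
    -- RHS
    have r1 : (∫ θ in (0:ℝ)..T, exp ((T - θ) • L0) * L1) v
        = ∫ θ in (0:ℝ)..T, (exp ((T - θ) • L0) * L1) v :=
      ContinuousLinearMap.intervalIntegral_apply hFint v
    have hFvint : IntervalIntegrable (fun θ : ℝ => (exp ((T - θ) • L0) * L1) v)
        MeasureTheory.volume 0 T :=
      ((ContinuousLinearMap.apply ℝ (Fin n → ℝ) v).continuous.comp hFc).intervalIntegrable _ _
    have r2 : (∫ θ in (0:ℝ)..T, (exp ((T - θ) • L0) * L1) v) i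
        = ∫ θ in (0:ℝ)..T, (exp ((T - θ) • L0) * L1) v i := by
      have := (ContinuousLinearMap.proj (R := ℝ) (φ := fun _ : Fin n => ℝ)
        i).intervalIntegral_comp_comm hFvint
      simpa using this.symm
    have r3 : ∀ θ : ℝ, (exp ((T - θ) • L0) * L1) v i
        = ∑ j, (exp ((T - θ) • A₀) * A₁) i j * v j := by
      intro θ
      have : exp ((T - θ) • L0) * L1 = matCLM ℝ n (exp ((T - θ) • A₀) * A₁) := by
        rw [_root_.map_mul, matCLM_exp, _root_.map_smul]
      rw [this, matCLM_apply]
      rfl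
    -- LHS
    have l1 : (matCLM ℝ n (Matrix.of fun i j =>
        ∫ θ in (0:ℝ)..T, (exp ((T - θ) • A₀) * A₁) i j)) v i
        = ∑ j, (∫ θ in (0:ℝ)..T, (exp ((T - θ) • A₀) * A₁) i j) * v j := by
      rw [matCLM_apply]
      rfl
    rw [l1, r1, r2]
    have l2 : ∀ j : Fin n, (∫ θ in (0:ℝ)..T, (exp ((T - θ) • A₀) * A₁) i j) * v j
        = ∫ θ in (0:ℝ)..T, (exp ((T - θ) • A₀) * A₁) i j * v j := by
      intro j
      exact (intervalIntegral.integral_mul_const (v j) _).symm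
    calc (∑ j, (∫ θ in (0:ℝ)..T, (exp ((T - θ) • A₀) * A₁) i j) * v j)
        = ∑ j, ∫ θ in (0:ℝ)..T, (exp ((T - θ) • A₀) * A₁) i j * v j := by
          exact Finset.sum_congr rfl fun j _ => l2 j
      _ = ∫ θ in (0:ℝ)..T, ∑ j, (exp ((T - θ) • A₀) * A₁) i j * v j := by
          exact (intervalIntegral.integral_finset_sum fun j _ =>
            ((hentry i j).mul continuous_const).intervalIntegrable _ _).symm
      _ = ∫ θ in (0:ℝ)..T, (exp ((T - θ) • L0) * L1) v i := by
          exact intervalIntegral.integral_congr fun θ _ => (r3 θ).symm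
  rw [e1, e2, Phi, hsub]

lemma matCLM_c_pow (M : Matrix (Fin n) (Fin n) ℝ) (k : ℕ) (v : Fin n → ℝ) :
    ((matCLM ℂ n (M.map (algebraMap ℝ ℂ))) ^ k) (cvec v) = cvec (((matCLM ℝ n M) ^ k) v) := by
  rw [← map_pow (matCLM ℂ n), matCLM_apply, ← map_pow (matCLM ℝ n), matCLM_apply]
  have h : (M.map (algebraMap ℝ ℂ)) ^ k = (M ^ k).map (algebraMap ℝ ℂ) := by
    have := map_pow ((algebraMap ℝ ℂ).mapMatrix) M k
    simpa [RingHom.mapMatrix_apply] using this.symm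
  rw [h, mulVec_map_cvec]

lemma c_opnorm_bound (M : Matrix (Fin n) (Fin n) ℝ) (k : ℕ) {B : ℝ} (hB : 0 ≤ B)
    (hb : ∀ v : Fin n → ℝ, ‖((matCLM ℝ n M) ^ k) v‖ ≤ B * ‖v‖) :
    ‖(matCLM ℂ n (M.map (algebraMap ℝ ℂ))) ^ k‖ ≤ 2 * B := by
  apply ContinuousLinearMap.opNorm_le_bound _ (by positivity)
  intro w
  set u : Fin n → ℝ := fun i => (w i).re with hu'
  set vv : Fin n → ℝ := fun i => (w i).im with hvv'
  have hw : w = cvec u + Complex.I • cvec vv := by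
    funext i
    simp only [cvec, Pi.add_apply, Pi.smul_apply, smul_eq_mul, hu', hvv']
    rw [mul_comm]
    exact (Complex.re_add_im (w i)).symm
  have happ : ((matCLM ℂ n (M.map (algebraMap ℝ ℂ))) ^ k) w
      = cvec (((matCLM ℝ n M) ^ k) u) + Complex.I • cvec (((matCLM ℝ n M) ^ k) vv) := by
    conv_lhs => rw [hw]
    rw [map_add, ContinuousLinearMap.map_smul, matCLM_c_pow, matCLM_c_pow]
  have hub : ‖u‖ ≤ ‖w‖ := by
    apply pi_norm_le_iff_of_nonneg (norm_nonneg w) |>.2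
    intro i
    calc ‖u i‖ ≤ ‖w i‖ := by simpa [hu'] using Complex.abs_re_le_norm (w i)
      _ ≤ ‖w‖ := norm_le_pi_norm w i
  have hvb : ‖vv‖ ≤ ‖w‖ := by
    apply pi_norm_le_iff_of_nonneg (norm_nonneg w) |>.2
    intro i
    calc ‖vv i‖ ≤ ‖w i‖ := by simpa [hvv'] using Complex.abs_im_le_norm (w i)
      _ ≤ ‖w‖ := norm_le_pi_norm w i
  calc ‖((matCLM ℂ n (M.map (algebraMap ℝ ℂ))) ^ k) w‖
      ≤ ‖cvec (((matCLM ℝ n M) ^ k) u)‖ + ‖Complex.I • cvec (((matCLM ℝ n M) ^ k) vv)‖ := by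
        rw [happ]; exact norm_add_le _ _
    _ = ‖((matCLM ℝ n M) ^ k) u‖ + ‖((matCLM ℝ n M) ^ k) vv‖ := by
        rw [norm_smul, Complex.norm_I, one_mul, norm_cvec, norm_cvec]
    _ ≤ B * ‖u‖ + B * ‖vv‖ := add_le_add (hb u) (hb vv)
    _ ≤ 2 * B * ‖w‖ := by nlinarith

lemma floor_eq_of_Ico {T : ℝ} (hT : 0 < T) (k : ℕ) {t : ℝ}
    (h1 : (k : ℝ) * T ≤ t) (h2 : t < ((k : ℝ) + 1) * T) : ⌊t / T⌋₊ = k := by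
  have ht0 : 0 ≤ t := le_trans (by positivity) h1
  rw [Nat.floor_eq_iff (by positivity)]
  constructor
  · rw [le_div_iff₀ hT]; linarith
  · rw [div_lt_iff₀ hT]; linarith

lemma exists_solution (A₀ A₁ : Matrix (Fin n) (Fin n) ℝ) {T : ℝ} (hT : 0 < T) (v : Fin n → ℝ) :
    ∃ x : ℝ → Fin n → ℝ, IsLinSampledSolution A₀ A₁ T x ∧
      ∀ k : ℕ, x ((k : ℝ) * T) = ((Phi A₀ A₁ T) ^ k) v := by
  classical
  set g : ℕ → ℝ → Fin n → ℝ :=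
    fun m t => Phi A₀ A₁ (t - (m : ℝ) * T) (((Phi A₀ A₁ T) ^ m) v) with hg
  set xs : ℝ → Fin n → ℝ := fun t => g ⌊t / T⌋₊ t with hxs
  have hgc : ∀ m, Continuous (g m) := by
    intro m
    exact continuous_iff_continuousAt.2 fun s =>
      (hasDerivAt_sol A₀ A₁ ((m : ℝ) * T) (((Phi A₀ A₁ T) ^ m) v) s).continuousAt
  have f2 : ∀ m : ℕ, ⌊((m : ℝ) * T) / T⌋₊ = m := by
    intro m
    rw [mul_div_assoc, div_self hT.ne', mul_one, Nat.floor_natCast]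
  have f3 : ∀ {t : ℝ}, t < T → ⌊t / T⌋₊ = 0 := by
    intro t ht
    rw [Nat.floor_eq_zero, div_lt_one hT]
    exact ht
  have fval : ∀ m : ℕ, xs ((m : ℝ) * T) = ((Phi A₀ A₁ T) ^ m) v := by
    intro m
    simp only [hxs, f2 m, hg, sub_self, Phi_zero]
    rfl
  have fe : ∀ m : ℕ, Set.EqOn xs (g m) (Set.Icc ((m : ℝ) * T) (((m : ℝ) + 1) * T)) := by
    intro m t ht
    rcases lt_or_eq_of_le ht.2 with h | h
    · simp only [hxs, floor_eq_of_Ico hT m ht.1 h]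
    · have h1 : t = ((m : ℝ) + 1) * T := h
      have h2 : xs t = ((Phi A₀ A₁ T) ^ (m + 1)) v := by
        rw [h1, show ((m : ℝ) + 1) = ((m + 1 : ℕ) : ℝ) by push_cast; ring]
        exact fval (m + 1)
      rw [h2, hg]
      simp only
      have h3 : t - (m : ℝ) * T = T := by rw [h1]; ring
      rw [h3, pow_succ' (Phi A₀ A₁ T) m]
      rfl
  have fe0 : Set.EqOn xs (g 0) (Set.Iio T) := by
    intro t ht
    simp only [hxs, f3 ht]
  refine ⟨xs, ⟨?_, ?_⟩, fval⟩
  · -- continuity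
    rw [continuous_iff_continuousAt]
    intro s
    by_cases hs : s < T
    · have hmem : Set.Iio T ∈ nhds s := isOpen_Iio.mem_nhds hs
      exact ((hgc 0).continuousAt).congr
        (Filter.eventuallyEq_of_mem hmem fun t ht => (fe0 ht).symm)
    · push_neg at hs
      have hs0 : (0 : ℝ) ≤ s := le_trans hT.le hs
      set m : ℕ := ⌊s / T⌋₊ with hm
      have h1 : (m : ℝ) * T ≤ s := by
        have := Nat.floor_le (by positivity : (0 : ℝ) ≤ s / T)
        calc (m : ℝ) * T ≤ (s / T) * T := by
              apply mul_le_mul_of_nonneg_right _ hT.le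
              exact this
          _ = s := div_mul_cancel₀ s hT.ne'
      have h2 : s < ((m : ℝ) + 1) * T := by
        have := Nat.lt_floor_add_one (s / T)
        calc s = (s / T) * T := (div_mul_cancel₀ s hT.ne').symm
          _ < ((m : ℝ) + 1) * T := by
              apply mul_lt_mul_of_pos_right _ hT
              exact this
      have hm1 : 1 ≤ m := by
        apply Nat.le_floor
        rw [Nat.cast_one, le_div_iff₀ hT]
        simpa using hs
      rcases eq_or_lt_of_le h1 with heq | hlt
      · -- junction point s = m*T
        have hmm : m = (m - 1) + 1 := (Nat.succ_pred_eq_of_pos hm1).symm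
        set m' : ℕ := m - 1
        have hIci : ContinuousWithinAt xs (Set.Ici s) s := by
          have hmem : Set.Icc ((m : ℝ) * T) (((m : ℝ) + 1) * T) ∈ nhdsWithin s (Set.Ici s) :=
            Icc_mem_nhdsGE_of_mem ⟨le_of_eq heq, by linarith⟩
          refine ((hgc m).continuousAt.continuousWithinAt).congr_of_eventuallyEq
            (Filter.eventuallyEq_of_mem hmem fun t ht => fe m ht) ?_
          exact fe m ⟨le_of_eq heq, by linarith⟩
        have hIic : ContinuousWithinAt xs (Set.Iic s) s := by
          have hcast : (m : ℝ) = (m' : ℝ) + 1 := by rw [hmm]; push_cast; ring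
          have hlow : ((m' : ℝ)) * T < s := by
            rw [← heq, hcast]
            nlinarith
          have hmem : Set.Icc ((m' : ℝ) * T) (((m' : ℝ) + 1) * T) ∈ nhdsWithin s (Set.Iic s) := by
            apply Icc_mem_nhdsLE_of_mem
            constructor
            · exact hlow
            · rw [← heq, hcast]
          refine ((hgc m').continuousAt.continuousWithinAt).congr_of_eventuallyEq
            (Filter.eventuallyEq_of_mem hmem fun t ht => fe m' ht) ?_
          apply fe m'
          constructor
          · exact hlow.le
          · rw [← heq, hcast]
        have := hIic.union hIci
        rw [Set.Iic_union_Ici] at this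
        rwa [continuousWithinAt_univ] at this
      · -- interior point
        have hmem : Set.Ioo ((m : ℝ) * T) (((m : ℝ) + 1) * T) ∈ nhds s :=
          isOpen_Ioo.mem_nhds ⟨hlt, h2⟩
        refine ((hgc m).continuousAt).congr
          (Filter.eventuallyEq_of_mem hmem fun t ht => ?_)
        exact (fe m ⟨ht.1.le, ht.2.le⟩).symm
  · -- derivative
    intro k t ht
    have hd := (hasDerivAt_sol A₀ A₁ ((k : ℝ) * T) (((Phi A₀ A₁ T) ^ k) v) t).hasDerivWithinAt
      (s := Set.Icc ((k : ℝ) * T) (((k : ℝ) + 1) * T))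
    have hd2 := hd.congr (fun u hu => fe k hu) (fe k ht)
    have e1 : xs t = Phi A₀ A₁ (t - (k : ℝ) * T) (((Phi A₀ A₁ T) ^ k) v) := fe k ht
    have e2 : xs ((k : ℝ) * T) = ((Phi A₀ A₁ T) ^ k) v := fval k
    rw [show A₀.mulVec (xs t) + A₁.mulVec (xs ((k : ℝ) * T))
        = matCLM ℝ n A₀ (Phi A₀ A₁ (t - (k : ℝ) * T) (((Phi A₀ A₁ T) ^ k) v))
          + matCLM ℝ n A₁ (((Phi A₀ A₁ T) ^ k) v) by rw [e1, e2]; rfl]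
    exact hd2

lemma stability_of_bound (A₀ A₁ : Matrix (Fin n) (Fin n) ℝ) {T : ℝ} (hT : 0 < T)
    {C2 r : ℝ} (hC2 : 1 ≤ C2) (hr0 : 1/2 ≤ r) (hr1 : r < 1)
    (hb : ∀ (k : ℕ) (v : Fin n → ℝ), ‖((Phi A₀ A₁ T) ^ k) v‖ ≤ C2 * r ^ k * ‖v‖) :
    ∃ K > (0:ℝ), ∃ γ > (0:ℝ), ∀ x : ℝ → Fin n → ℝ, IsLinSampledSolution A₀ A₁ T x →
      ∀ t : ℝ, 0 ≤ t → ‖x t‖ ≤ K * ‖x 0‖ * Real.exp (-γ * t) := by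
  obtain ⟨C1, hC1⟩ := (isCompact_Icc (a := (0:ℝ)) (b := T)).exists_bound_of_continuousOn
    (Phi_continuous A₀ A₁).continuousOn
  set C1' := max C1 1 with hC1'
  have hC1'1 : (1:ℝ) ≤ C1' := le_max_right _ _
  have hrpos : (0:ℝ) < r := lt_of_lt_of_le (by norm_num) hr0
  set γ := -Real.log r / T with hγ
  have hγpos : 0 < γ := by
    apply div_pos _ hT
    have := Real.log_neg hrpos hr1
    linarith
  refine ⟨2 * C1' * C2, by positivity, γ, hγpos, ?_⟩
  intro x hx t ht0
  set k := ⌊t / T⌋₊ with hk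
  have h1 : (k : ℝ) * T ≤ t := by
    have := Nat.floor_le (by positivity : (0:ℝ) ≤ t / T)
    calc (k:ℝ)*T ≤ (t/T)*T := mul_le_mul_of_nonneg_right this hT.le
      _ = t := div_mul_cancel₀ t hT.ne'
  have h2 : t < ((k:ℝ)+1) * T := by
    have := Nat.lt_floor_add_one (t / T)
    calc t = (t/T)*T := (div_mul_cancel₀ t hT.ne').symm
      _ < ((k:ℝ)+1)*T := mul_lt_mul_of_pos_right this hT
  have hrepr : x t = Phi A₀ A₁ (t - (k:ℝ)*T) (x ((k:ℝ)*T)) :=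
    solution_repr hx k ⟨h1, h2.le⟩
  have hiter : x ((k:ℝ)*T) = ((Phi A₀ A₁ T)^k) (x 0) := solution_iterate hT hx k
  have hb1 : ‖x t‖ ≤ C1' * ‖x ((k:ℝ)*T)‖ := by
    rw [hrepr]
    calc ‖Phi A₀ A₁ (t - (k:ℝ)*T) (x ((k:ℝ)*T))‖
        ≤ ‖Phi A₀ A₁ (t - (k:ℝ)*T)‖ * ‖x ((k:ℝ)*T)‖ := ContinuousLinearMap.le_opNorm _ _
      _ ≤ C1' * ‖x ((k:ℝ)*T)‖ := by
          apply mul_le_mul_of_nonneg_right _ (norm_nonneg _)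
          refine le_trans (hC1 _ ⟨by linarith, by linarith⟩) (le_max_left _ _)
  have hree : r ^ k ≤ 2 * Real.exp (-γ * t) := by
    have e1 : Real.exp (-γ * (((k:ℝ)+1)*T)) ≤ Real.exp (-γ * t) := by
      apply Real.exp_le_exp.2
      nlinarith
    have e2 : Real.exp (-γ * (((k:ℝ)+1)*T)) = r ^ (k+1) := by
      have harg : -γ * (((k:ℝ)+1)*T) = ((k+1 : ℕ) : ℝ) * Real.log r := by
        rw [hγ]
        push_cast
        field_simp
      rw [harg, Real.exp_nat_mul, Real.exp_log hrpos]
    have e3 : r ^ (k+1) = r ^ k * r := pow_succ r k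
    have e4 : r ^ k * (1/2) ≤ r ^ k * r :=
      mul_le_mul_of_nonneg_left hr0 (pow_nonneg hrpos.le k)
    nlinarith [Real.exp_pos (-γ * t)]
  have hb2 : ‖x ((k:ℝ)*T)‖ ≤ C2 * r ^ k * ‖x 0‖ := by
    rw [hiter]
    exact hb k (x 0)
  have hfin : ‖x t‖ ≤ C1' * (C2 * r ^ k * ‖x 0‖) :=
    le_trans hb1 (mul_le_mul_of_nonneg_left hb2 (by linarith))
  calc ‖x t‖ ≤ C1' * (C2 * r ^ k * ‖x 0‖) := hfin
    _ ≤ C1' * (C2 * (2 * Real.exp (-γ * t)) * ‖x 0‖) := by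
        apply mul_le_mul_of_nonneg_left _ (by linarith)
        apply mul_le_mul_of_nonneg_right _ (norm_nonneg _)
        apply mul_le_mul_of_nonneg_left hree (by linarith)
    _ = 2 * C1' * C2 * ‖x 0‖ * Real.exp (-γ * t) := by ring

set_option maxHeartbeats 1000000 in
/-- The linear sampled-data system `ẋ(t) = A₀x(t) + A₁x(t_k)` with constant
sampling period `T > 0` is globally exponentially stable iff the spectral radius
of `e^{A₀T} + ∫₀ᵀ e^{A₀(T−θ)} A₁ dθ` is strictly less than one. -/
theorem linear_sampled_data_stability_iff {n : ℕ}
    (A₀ A₁ : Matrix (Fin n) (Fin n) ℝ) (T : ℝ) (hT : 0 < T) :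
    (∃ K > (0 : ℝ), ∃ γ > (0 : ℝ), ∀ x : ℝ → Fin n → ℝ,
        IsLinSampledSolution A₀ A₁ T x →
          ∀ t : ℝ, 0 ≤ t → ‖x t‖ ≤ K * ‖x 0‖ * Real.exp (-γ * t)) ↔
      spectralRadius ℂ
        ((NormedSpace.exp (T • A₀) +
            Matrix.of fun i j =>
              ∫ θ in (0 : ℝ)..T, (NormedSpace.exp ((T - θ) • A₀) * A₁) i j).map
          (algebraMap ℝ ℂ)) < 1 := by
  classical
  set Mmat : Matrix (Fin n) (Fin n) ℝ :=
    NormedSpace.exp (T • A₀) +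
      Matrix.of fun i j => ∫ θ in (0 : ℝ)..T, (NormedSpace.exp ((T - θ) • A₀) * A₁) i j
    with hMmat
  have hME : matCLM ℝ n Mmat = Phi A₀ A₁ T := hME_aux A₀ A₁ T
  set Lc := matCLM ℂ n (Mmat.map (algebraMap ℝ ℂ)) with hLc
  have hsr : spectralRadius ℂ (Mmat.map (algebraMap ℝ ℂ)) = spectralRadius ℂ Lc := by
    unfold spectralRadius
    rw [AlgEquiv.spectrum_eq (matCLM ℂ n) (Mmat.map (algebraMap ℝ ℂ))]
  constructor
  · rintro ⟨K, hK, γ, hγ, hstab⟩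
    rw [hsr]
    have hMEk : ∀ (k : ℕ) (v : Fin n → ℝ),
        ‖((Phi A₀ A₁ T) ^ k) v‖ ≤ (K * Real.exp (-γ * ((k:ℝ) * T))) * ‖v‖ := by
      intro k v
      obtain ⟨x, hx, hval⟩ := exists_solution A₀ A₁ hT v
      have h0 : x 0 = v := by simpa using hval 0
      have hst := hstab x hx ((k:ℝ)*T) (by positivity)
      rw [hval k, h0] at hst
      calc ‖((Phi A₀ A₁ T) ^ k) v‖ ≤ K * ‖v‖ * Real.exp (-γ * ((k:ℝ) * T)) := hst
        _ = (K * Real.exp (-γ * ((k:ℝ) * T))) * ‖v‖ := by ring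
    have hLck : ∀ k : ℕ, ‖Lc ^ k‖ ≤ 2 * (K * Real.exp (-γ * ((k:ℝ) * T))) := by
      intro k
      rw [hLc]
      exact c_opnorm_bound Mmat k (by positivity)
        (fun v => by rw [hME]; exact hMEk k v)
    obtain ⟨m, hm⟩ := exists_nat_gt (Real.log (2 * K) / (γ * T))
    have h2K : (0:ℝ) < 2 * K := by positivity
    have hlog : Real.log (2 * K) < γ * (((m:ℝ)+1) * T) := by
      rw [div_lt_iff₀ (by positivity)] at hm
      nlinarith
    have hexp : 2 * (K * Real.exp (-γ * ((((m+1):ℕ):ℝ) * T))) < 1 := by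
      have heq : 2 * (K * Real.exp (-γ * ((((m+1):ℕ):ℝ) * T)))
          = Real.exp (Real.log (2 * K) + (-γ * (((m:ℝ)+1) * T))) := by
        rw [Real.exp_add, Real.exp_log h2K]
        push_cast
        ring
      rw [heq]
      have h0 : Real.log (2 * K) + -γ * (((m:ℝ)+1) * T) < 0 := by linarith
      have := Real.exp_lt_exp.2 h0
      simpa using this
    have hnorm1 : ‖Lc ^ (m+1)‖ < 1 := lt_of_le_of_lt (hLck (m+1)) hexp
    have hnorm : ‖Lc ^ (m+1)‖₊ < 1 := by
      rw [← NNReal.coe_lt_coe]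
      simpa [coe_nnnorm] using hnorm1
    calc spectralRadius ℂ Lc
        ≤ (‖Lc ^ (m+1)‖₊ : ENNReal) ^ (1/((m:ℝ)+1)) *
          (‖(1 : (Fin n → ℂ) →L[ℂ] (Fin n → ℂ))‖₊ : ENNReal) ^ (1/((m:ℝ)+1)) := by
          have := spectrum.spectralRadius_le_pow_nnnorm_pow_one_div ℂ Lc m
          convert this using 3 <;> push_cast <;> ring
      _ ≤ (‖Lc ^ (m+1)‖₊ : ENNReal) ^ (1/((m:ℝ)+1)) * 1 := by
          apply mul_le_mul_right
          apply ENNReal.rpow_le_one _ (by positivity)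
          have h1le : ‖(1 : (Fin n → ℂ) →L[ℂ] (Fin n → ℂ))‖ ≤ 1 := by
            rw [ContinuousLinearMap.one_def]
            exact ContinuousLinearMap.norm_id_le
          have : ‖(1 : (Fin n → ℂ) →L[ℂ] (Fin n → ℂ))‖₊ ≤ 1 := by
            rw [← NNReal.coe_le_coe]
            simpa [coe_nnnorm] using h1le
          exact_mod_cast this
      _ < 1 := by
          rw [mul_one]
          apply ENNReal.rpow_lt_one _ (by positivity)
          exact_mod_cast hnorm
  · intro hρ
    rw [hsr] at hρ
    have hten := spectrum.pow_nnnorm_pow_one_div_tendsto_nhds_spectralRadius Lc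
    obtain ⟨r', hr'1, hr'2⟩ := ENNReal.lt_iff_exists_nnreal_btwn.1 hρ
    have hev : ∀ᶠ (k : ℕ) in Filter.atTop,
        (‖Lc ^ k‖₊ : ENNReal) ^ (1/(k:ℝ)) < (r' : ENNReal) :=
      hten.eventually_lt_const hr'1
    obtain ⟨N, hN⟩ := Filter.eventually_atTop.1 hev
    have hr'lt1 : (r' : ℝ) < 1 := by exact_mod_cast hr'2
    set r : ℝ := max (r' : ℝ) (1/2) with hrdef
    have hr0 : 1/2 ≤ r := le_max_right _ _
    have hr1 : r < 1 := max_lt hr'lt1 (by norm_num)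
    have hrpos : (0:ℝ) < r := lt_of_lt_of_le (by norm_num) hr0
    set Nn := max N 1 with hNn
    have hnormk : ∀ k : ℕ, Nn ≤ k → ‖Lc ^ k‖ ≤ r ^ k := by
      intro k hk
      have hk1 : 1 ≤ k := le_trans (le_max_right _ _) hk
      have hkpos : (0:ℝ) < (k:ℝ) := by exact_mod_cast hk1
      have h1 : (‖Lc ^ k‖₊ : ENNReal) ^ (1/(k:ℝ)) < (r' : ENNReal) :=
        hN k (le_trans (le_max_left _ _) hk)
      have h2 : (‖Lc ^ k‖₊ : ENNReal) < (r' : ENNReal) ^ (k:ℝ) := by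
        have := ENNReal.rpow_lt_rpow h1 hkpos
        rwa [← ENNReal.rpow_mul, one_div, inv_mul_cancel₀ hkpos.ne', ENNReal.rpow_one] at this
      have h3 : ‖Lc ^ k‖₊ < r' ^ k := by
        rw [ENNReal.rpow_natCast, ← ENNReal.coe_pow] at h2
        exact_mod_cast h2
      have h4 : ‖Lc ^ k‖ < (r' : ℝ) ^ k := by
        calc ‖Lc ^ k‖ = (‖Lc ^ k‖₊ : ℝ) := (coe_nnnorm _).symm
          _ < ((r' ^ k : NNReal) : ℝ) := by exact_mod_cast h3
          _ = (r' : ℝ) ^ k := by push_cast; ring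
      calc ‖Lc ^ k‖ ≤ (r' : ℝ) ^ k := h4.le
        _ ≤ r ^ k := pow_le_pow_left₀ (r'.coe_nonneg) (le_max_left _ _) k
    set C2 : ℝ := 1 + ∑ j ∈ Finset.range Nn, ‖Lc ^ j‖ / r ^ j with hC2def
    have hsum0 : 0 ≤ ∑ j ∈ Finset.range Nn, ‖Lc ^ j‖ / r ^ j :=
      Finset.sum_nonneg fun j _ => by positivity
    have hC2ge : 1 ≤ C2 := by rw [hC2def]; linarith
    have hball : ∀ k : ℕ, ‖Lc ^ k‖ ≤ C2 * r ^ k := by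
      intro k
      rcases le_or_gt Nn k with h | h
      · calc ‖Lc ^ k‖ ≤ r ^ k := hnormk k h
          _ ≤ C2 * r ^ k := by nlinarith [pow_pos hrpos k]
      · have hmem : k ∈ Finset.range Nn := Finset.mem_range.2 h
        have hsle : ‖Lc ^ k‖ / r ^ k ≤ ∑ j ∈ Finset.range Nn, ‖Lc ^ j‖ / r ^ j :=
          Finset.single_le_sum (f := fun j => ‖Lc ^ j‖ / r ^ j)
            (fun j _ => by positivity) hmem
        have h4 : ‖Lc ^ k‖ / r ^ k ≤ C2 := by linarith
        calc ‖Lc ^ k‖ = (‖Lc ^ k‖ / r ^ k) * r ^ k :=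
              (div_mul_cancel₀ _ (pow_ne_zero k hrpos.ne')).symm
          _ ≤ C2 * r ^ k := mul_le_mul_of_nonneg_right h4 (pow_pos hrpos k).le
    have hMEb : ∀ (k : ℕ) (v : Fin n → ℝ),
        ‖((Phi A₀ A₁ T) ^ k) v‖ ≤ C2 * r ^ k * ‖v‖ := by
      intro k v
      have h1 : (Lc ^ k) (cvec v) = cvec (((Phi A₀ A₁ T) ^ k) v) := by
        rw [hLc, matCLM_c_pow, hME]
      calc ‖((Phi A₀ A₁ T) ^ k) v‖ = ‖cvec (((Phi A₀ A₁ T) ^ k) v)‖ := (norm_cvec _).symm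
        _ = ‖(Lc ^ k) (cvec v)‖ := by rw [h1]
        _ ≤ ‖Lc ^ k‖ * ‖cvec v‖ := ContinuousLinearMap.le_opNorm _ _
        _ = ‖Lc ^ k‖ * ‖v‖ := by rw [norm_cvec]
        _ ≤ C2 * r ^ k * ‖v‖ :=
            mul_le_mul_of_nonneg_right (hball k) (norm_nonneg v)
    exact stability_of_bound A₀ A₁ hT hC2ge hr0 hr1 hMEb
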